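/- Let F be a field of characteristic p. Let H₁ denote the group, under componentwise multiplication, of coherent G-stable tuples of linear characters with values in F, and let H₂ denote the subgroup of H₁ consisting of those tuples (ψ_P) that additionally satisfy P·C_G(P) ≤ ker(ψ_P) for all p-subgroups P of G. Then the map Hom(G, F^×) × H₂ → H₁ sending (φ, (ψ_P)) to the tuple whose P-component is the product of the restriction of φ to N_G(P) with ψ_P is a group isomorphism. In particular, H₁ ≅ Hom(G, F^×) × H₂. -/

import Mathlib

/-!  Common definitions: representations of finite groups over a commutative ring,
direct summands, permutation modules, vertices, Brauer-type trivial parts, characters,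
p-parts of group elements, coherent tuples.  -/

open scoped TensorProduct

universe u v w

section Defs

variable {k : Type u} [CommSemiring k]

/-- `ρ` is isomorphic to a direct summand of `σ`, equivariantly. -/
def IsSummand {G : Type*} [Monoid G] {V : Type*} [AddCommMonoid V] [Module k V]
    {W : Type*} [AddCommMonoid W] [Module k W]
    (ρ : Representation k G V) (σ : Representation k G W) : Prop :=
  ∃ (i : V →ₗ[k] W) (π : W →ₗ[k] V),
    (∀ g v, i (ρ g v) = σ g (i v)) ∧ (∀ g w, π (σ g w) = ρ g (π w)) ∧ ∀ v, π (i v) = v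

/-- equivariant isomorphism of representations -/
def RepEquiv {G : Type*} [Monoid G] {V : Type*} [AddCommMonoid V] [Module k V]
    {W : Type*} [AddCommMonoid W] [Module k W]
    (ρ : Representation k G V) (σ : Representation k G W) : Prop :=
  ∃ e : V ≃ₗ[k] W, ∀ g v, e (ρ g v) = σ g (e v)

/-- the direct sum of two representations -/
def prodRep {G : Type*} [Monoid G] {V : Type*} [AddCommMonoid V] [Module k V]
    {W : Type*} [AddCommMonoid W] [Module k W]
    (ρ : Representation k G V) (σ : Representation k G W) :
    Representation k G (V × W) where
  toFun g := (ρ g).prodMap (σ g)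
  map_one' := by apply LinearMap.ext; intro v; simp
  map_mul' g h := by apply LinearMap.ext; intro v; simp

/-- the permutation representation attached to an action of `G` on `X` by permutations -/
def permRep {G : Type*} [Group G] (X : Type*) (a : G →* Equiv.Perm X) :
    Representation k G (X → k) where
  toFun g := LinearMap.funLeft k k (a g⁻¹)
  map_one' := by apply LinearMap.ext; intro f; simp [LinearMap.funLeft]
  map_mul' g h := by
    apply LinearMap.ext; intro f; funext x
    simp [LinearMap.funLeft, mul_inv_rev]

/-- a p-permutation module over `k`: a module isomorphic to a direct summand of a
permutation module `k[X]` for a finite `G`-set `X` -/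
def IsPermutationSummand {G : Type*} [Group G] {V : Type*} [AddCommMonoid V] [Module k V]
    (ρ : Representation k G V) : Prop :=
  ∃ (X : Type u) (a : G →* Equiv.Perm X), Finite X ∧ IsSummand ρ (permRep X a)

/-- an indecomposable representation: nonzero, and every equivariant idempotent
endomorphism is `0` or the identity -/
def IsIndecomposableRep {G : Type*} [Monoid G] {V : Type*} [AddCommMonoid V] [Module k V]
    (ρ : Representation k G V) : Prop :=
  (∃ v : V, v ≠ 0) ∧ ∀ f : V →ₗ[k] V,
    (∀ g v, f (ρ g v) = ρ g (f v)) → (∀ v, f (f v) = f v) →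
      (∀ v, f v = 0) ∨ (∀ v, f v = v)

/-- the carrier of the induced module `Ind_H^G (Res_H^G ρ)`:
functions `f : G → V` with `f (h * g) = ρ h (f g)` for `h ∈ H` -/
def indResCarrier {G : Type*} [Group G] {V : Type*} [AddCommMonoid V] [Module k V]
    (ρ : Representation k G V) (H : Subgroup G) : Submodule k (G → V) where
  carrier := {f | ∀ (h : H) (g : G), f (↑h * g) = ρ ↑h (f g)}
  add_mem' := by
    intro f g hf hg h x
    simp only [Pi.add_apply, hf h x, hg h x, map_add]
  zero_mem' := by intro h x; simp
  smul_mem' := by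
    intro c f hf h x
    simp only [Pi.smul_apply, hf h x, map_smul]

/-- the representation `Ind_H^G (Res_H^G ρ)`, with `G` acting by right translation -/
def indResRep {G : Type*} [Group G] {V : Type*} [AddCommMonoid V] [Module k V]
    (ρ : Representation k G V) (H : Subgroup G) :
    Representation k G (indResCarrier ρ H) where
  toFun g :=
    { toFun := fun f => ⟨fun x => (f : G → V) (x * g), fun h x => by
        simpa [mul_assoc] using f.2 h (x * g)⟩
      map_add' := fun f₁ f₂ => rfl
      map_smul' := fun c f => rfl }
  map_one' := by
    apply LinearMap.ext; intro f; apply Subtype.ext; funext x; simp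
  map_mul' g₁ g₂ := by
    apply LinearMap.ext; intro f; apply Subtype.ext; funext x
    show (f : G → V) (x * (g₁ * g₂)) = (f : G → V) (x * g₁ * g₂)
    rw [mul_assoc]

/-- `ρ` is relatively `H`-projective in the sense that it is a direct summand of
`Ind_H^G (Res_H^G ρ)` -/
def IsRelativelyProjective {G : Type*} [Group G] {V : Type*} [AddCommMonoid V] [Module k V]
    (ρ : Representation k G V) (H : Subgroup G) : Prop :=
  IsSummand ρ (indResRep ρ H)

/-- `Q` is a vertex of `ρ`: minimal among the subgroups `R` with
`ρ` a direct summand of `Ind_R^G (Res_R^G ρ)` -/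
def IsVertex {G : Type*} [Group G] {V : Type*} [AddCommMonoid V] [Module k V]
    (ρ : Representation k G V) (Q : Subgroup G) : Prop :=
  IsRelativelyProjective ρ Q ∧ ∀ R : Subgroup G, R < Q → ¬ IsRelativelyProjective ρ R

end Defs

/-- a bundled representation of `G` over `k` -/
structure RepOn (k : Type u) (G : Type v) [CommSemiring k] [Monoid G] :
    Type (max (u + 1) v) where
  carrier : Type u
  [isAddCommGroup : AddCommGroup carrier]
  [isModule : Module k carrier]
  ρ : Representation k G carrier

attribute [instance] RepOn.isAddCommGroup RepOn.isModule

section Defs2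

variable {k : Type u} [CommSemiring k]

/-- the subgroup `P` acts trivially on the representation `σ` -/
def TrivialOn {Γ : Type*} [Group Γ] {V : Type*} [AddCommMonoid V] [Module k V]
    (σ : Representation k Γ V) (P : Subgroup Γ) : Prop :=
  ∀ x ∈ P, ∀ v : V, σ x v = v

/-- `A` is a `P`-trivial part of `σ`: `σ ≅ A ⊕ B` where `P` acts trivially on `A` and
no nonzero direct summand of `B` has trivial `P`-action -/
def IsTrivialPartFor {Γ : Type v} [Group Γ] {V : Type*} [AddCommMonoid V] [Module k V]
    (σ : Representation k Γ V) (P : Subgroup Γ) (A : RepOn k Γ) : Prop :=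
  TrivialOn A.ρ P ∧
  ∃ B : RepOn k Γ, RepEquiv σ (prodRep A.ρ B.ρ) ∧
    ∀ U : RepOn k Γ, IsSummand U.ρ B.ρ → TrivialOn U.ρ P → ∀ u : U.carrier, u = 0

/-- `A` is a `P`-trivial part `M_P` of `ρ`: a direct summand of
`Res^G_{N_G(P)} ρ` with trivial `P`-action whose complement has no nonzero direct
summand with trivial `P`-action -/
def IsPTrivialPart {G : Type v} [Group G] {V : Type*} [AddCommMonoid V] [Module k V]
    (ρ : Representation k G V) (P : Subgroup G) (A : RepOn k ↥(Subgroup.normalizer (P : Set G))) : Prop :=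
  IsTrivialPartFor (ρ.comp (Subgroup.normalizer (P : Set G)).subtype) (P.subgroupOf (Subgroup.normalizer (P : Set G))) A

end Defs2

/-- the character value at `x` of the `K ⊗ₖ -` base change of the representation `σ` -/
noncomputable def charAt {k : Type u} [CommRing k] (K : Type v) [CommRing K] [Algebra k K]
    {Γ : Type*} [Monoid Γ] {V : Type*} [AddCommGroup V] [Module k V]
    (σ : Representation k Γ V) (x : Γ) : K :=
  LinearMap.trace K (TensorProduct k K V) (LinearMap.baseChange K (σ x))

/-- the `p`-part of a group element (of finite order) -/
noncomputable def pPart (p : ℕ) {G : Type*} [Group G] (x : G) : G :=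
  x ^ ((orderOf x / p ^ (orderOf x).factorization p) *
    (((orderOf x / p ^ (orderOf x).factorization p : ℕ) :
        ZMod (p ^ (orderOf x).factorization p))⁻¹).val)

/-- the `p'`-part of a natural number -/
def pPrimePart (p n : ℕ) : ℕ := n / p ^ n.factorization p

/-- the conjugate subgroup `g P g⁻¹` -/
def conjSubgroup {G : Type*} [Group G] (g : G) (P : Subgroup G) : Subgroup G :=
  Subgroup.map (MulAut.conj g).toMonoidHom P

/-- `(ρM, ρN)` is an orthogonal unit pair:
`(M ⊗ M°) ⊕ (N ⊗ N°) ≅ k ⊕ (M ⊗ N°) ⊕ (N ⊗ M°)` equivariantly, i.e.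
`[M] - [N]` is an orthogonal unit of the trivial source ring -/
def IsOrthogonalUnitPair {k : Type u} [CommRing k] {G : Type v} [Group G]
    {V : Type*} [AddCommGroup V] [Module k V] {W : Type*} [AddCommGroup W] [Module k W]
    (ρM : Representation k G V) (ρN : Representation k G W) : Prop :=
  RepEquiv (prodRep (ρM.tprod ρM.dual) (ρN.tprod ρN.dual))
    (prodRep (Representation.trivial k (G := G) (V := k)) (prodRep (ρM.tprod ρN.dual) (ρN.tprod ρM.dual)))

/-- the type of `p`-subgroups of `G` -/
def pSubgroup (p : ℕ) (G : Type*) [Group G] : Type _ := {P : Subgroup G // IsPGroup p ↥P}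

/-- a coherent `G`-stable tuple of linear characters:
`P ≤ ker φ_P`, `G`-stability, and the coherence condition
`φ_P(x) = φ_{P⟨x_p⟩}(x)` for `x ∈ N_G(P)` -/
def CoherentPred (p : ℕ) {G : Type*} [Group G] {L : Type*} [CommMonoid L]
    (φ : ∀ P : pSubgroup p G, ↥(Subgroup.normalizer (P.1 : Set G)) →* Lˣ) : Prop :=
  (∀ (P : pSubgroup p G) (x : G) (hx : x ∈ P.1),
      φ P ⟨x, Subgroup.le_normalizer hx⟩ = 1) ∧
  (∀ (P Q : pSubgroup p G) (g x : G) (hx : x ∈ (Subgroup.normalizer (P.1 : Set G))),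
      Q.1 = conjSubgroup g P.1 → ∀ (hx' : g * x * g⁻¹ ∈ (Subgroup.normalizer (Q.1 : Set G))),
      φ Q ⟨g * x * g⁻¹, hx'⟩ = φ P ⟨x, hx⟩) ∧
  (∀ (P Q : pSubgroup p G) (x : G) (hx : x ∈ (Subgroup.normalizer (P.1 : Set G))),
      Q.1 = P.1 ⊔ Subgroup.zpowers (pPart p x) → ∀ (hx' : x ∈ (Subgroup.normalizer (Q.1 : Set G))),
      φ P ⟨x, hx⟩ = φ Q ⟨x, hx'⟩)

/-- the group of coherent `G`-stable tuples of linear characters with values in `L` -/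
def coherentTuples (p : ℕ) (G : Type w) [Group G] (L : Type v) [CommMonoid L] :
    Subgroup (∀ P : pSubgroup p G, ↥(Subgroup.normalizer (P.1 : Set G)) →* Lˣ) where
  carrier := {φ | CoherentPred p φ}
  one_mem' := ⟨fun _ _ _ => rfl, fun _ _ _ _ _ _ _ => rfl, fun _ _ _ _ _ _ => rfl⟩
  mul_mem' := by
    intro a b ha hb
    refine ⟨fun P x hx => ?_, fun P Q g x hx hQ hx' => ?_, fun P Q x hx hQ hx' => ?_⟩
    · show a P _ * b P _ = 1
      rw [ha.1 P x hx, hb.1 P x hx, mul_one]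
    · show a Q _ * b Q _ = a P _ * b P _
      rw [ha.2.1 P Q g x hx hQ hx', hb.2.1 P Q g x hx hQ hx']
    · show a P _ * b P _ = a Q _ * b Q _
      rw [ha.2.2 P Q x hx hQ hx', hb.2.2 P Q x hx hQ hx']
  inv_mem' := by
    intro a ha
    refine ⟨fun P x hx => ?_, fun P Q g x hx hQ hx' => ?_, fun P Q x hx hQ hx' => ?_⟩
    · show (a P _)⁻¹ = 1
      rw [ha.1 P x hx, inv_one]
    · show (a Q _)⁻¹ = (a P _)⁻¹
      rw [ha.2.1 P Q g x hx hQ hx']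
    · show (a P _)⁻¹ = (a Q _)⁻¹
      rw [ha.2.2 P Q x hx hQ hx']

/-- the group of coherent `G`-stable tuples `(ψ_P)` of linear characters which
additionally satisfy `P ⬝ C_G(P) ≤ ker ψ_P` for all `p`-subgroups `P` -/
def coherentTuplesCent (p : ℕ) (G : Type w) [Group G] (L : Type v) [CommMonoid L] :
    Subgroup (∀ P : pSubgroup p G, ↥(Subgroup.normalizer (P.1 : Set G)) →* Lˣ) where
  carrier := {φ | CoherentPred p φ ∧
    ∀ (P : pSubgroup p G) (x : G),
      x ∈ P.1 ⊔ Subgroup.centralizer (P.1 : Set G) →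
      ∀ hx : x ∈ (Subgroup.normalizer (P.1 : Set G)), φ P ⟨x, hx⟩ = 1}
  one_mem' := ⟨(coherentTuples p G L).one_mem', fun _ _ _ _ => rfl⟩
  mul_mem' := by
    intro a b ha hb
    refine ⟨(coherentTuples p G L).mul_mem' ha.1 hb.1, fun P x hxc hx => ?_⟩
    show a P _ * b P _ = 1
    rw [ha.2 P x hxc hx, hb.2 P x hxc hx, mul_one]
  inv_mem' := by
    intro a ha
    refine ⟨(coherentTuples p G L).inv_mem' ha.1, fun P x hxc hx => ?_⟩
    show (a P _)⁻¹ = 1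
    rw [ha.2 P x hxc hx, inv_one]

section Aux

variable {p : ℕ} [Fact p.Prime]

lemma aux_units_eq_one {F : Type v} [Field F] [CharP F p] (a : Fˣ) (k : ℕ)
    (h : a ^ p ^ k = 1) : a = 1 := by
  have h1 : (a : F) ^ p ^ k = 1 := by
    have := congrArg Units.val h
    push_cast at this
    simpa using this
  have h2 : ((a : F) - 1) ^ p ^ k = 0 := by
    rw [sub_pow_char_pow, h1, one_pow, sub_self]
  have h3 : (a : F) - 1 = 0 :=
    pow_eq_zero_iff (pow_ne_zero k (Fact.out : p.Prime).ne_zero) |>.mp h2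
  rw [sub_eq_zero] at h3
  exact Units.ext (by simpa using h3)

lemma aux_hom_eq_one {F : Type v} [Field F] [CharP F p] {H : Type*} [Group H]
    (χ : H →* Fˣ) {x : H} (hx : ∃ k, x ^ p ^ k = 1) : χ x = 1 := by
  obtain ⟨k, hk⟩ := hx
  exact aux_units_eq_one (χ x) k (by rw [← map_pow, hk, map_one])

lemma aux_modeq (m k : ℕ) (hm : m.Coprime (p ^ k)) :
    m * ((m : ZMod (p ^ k))⁻¹).val ≡ 1 [MOD p ^ k] := by
  haveI : NeZero (p ^ k) := ⟨pow_ne_zero k (Fact.out : p.Prime).ne_zero⟩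
  rw [← ZMod.natCast_eq_natCast_iff]
  push_cast
  rw [ZMod.natCast_val, ZMod.cast_id]
  exact ZMod.coe_mul_inv_eq_one m hm

variable {G : Type w} [Group G] [Finite G]

lemma aux_pPart_mem_zpowers (x : G) : pPart p x ∈ Subgroup.zpowers x :=
  Subgroup.pow_mem _ (Subgroup.mem_zpowers x) _

lemma aux_pPart_pow (x : G) : pPart p x ^ p ^ ((orderOf x).factorization p) = 1 := by
  set k := (orderOf x).factorization p with hk
  set m := orderOf x / p ^ k with hm
  set t := ((m : ZMod (p ^ k))⁻¹).val with ht
  have h1 : p ^ k * m = orderOf x := Nat.ordProj_mul_ordCompl_eq_self (orderOf x) p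
  show (x ^ (m * t)) ^ p ^ k = 1
  rw [← pow_mul]
  exact orderOf_dvd_iff_pow_eq_one.mp (dvd_trans (dvd_of_eq h1.symm) ⟨t, by ring⟩)

lemma aux_pPart_pelement (x : G) : ∃ k, pPart p x ^ p ^ k = 1 :=
  ⟨_, aux_pPart_pow x⟩

lemma aux_orderOf_coprime (x : G) : (orderOf ((pPart p x)⁻¹ * x)).Coprime p := by
  set n := orderOf x with hn
  set k := n.factorization p with hk
  set m := n / p ^ k with hm
  set t := ((m : ZMod (p ^ k))⁻¹).val with ht
  have hn0 : n ≠ 0 := (orderOf_pos x).ne'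
  have hpm : Nat.Coprime p m := Nat.coprime_ordCompl (Fact.out : p.Prime) hn0
  have hmpk : m.Coprime (p ^ k) := (hpm.symm).pow_right k
  have hmod := aux_modeq m k hmpk
  have hdvd : ((p : ℤ) ^ k) ∣ (1 - (m * t : ℕ) : ℤ) := by
    have := hmod.dvd
    exact_mod_cast this
  have hrw : (pPart p x)⁻¹ * x = x ^ ((1 : ℤ) - (m * t : ℕ)) := by
    have hcomm : x * (x ^ (m * t))⁻¹ = (x ^ (m * t))⁻¹ * x :=
      (((Commute.refl x).pow_right (m * t)).inv_right).eq
    rw [zpow_sub, zpow_one, zpow_natCast]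
    show (x ^ (m * t))⁻¹ * x = x * (x ^ (m * t))⁻¹
    rw [hcomm]
  have hpow : ((pPart p x)⁻¹ * x) ^ m = 1 := by
    rw [hrw, ← zpow_natCast, ← zpow_mul]
    refine orderOf_dvd_iff_zpow_eq_one.mp ?_
    have hne : (n : ℤ) = (p : ℤ) ^ k * m := by
      have h1 : p ^ k * m = n := Nat.ordProj_mul_ordCompl_eq_self n p
      push_cast [← h1]
      ring
    rw [← hn, hne]
    exact mul_dvd_mul_right hdvd (m : ℤ)
  exact Nat.Coprime.coprime_dvd_left (orderOf_dvd_of_pow_eq_one hpow) hpm.symm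

lemma aux_pPart_eq_of {x : G} {α m : ℕ} (hk : (orderOf x).factorization p = α)
    (hm : orderOf x / p ^ α = m) :
    pPart p x = x ^ (m * ((m : ZMod (p ^ α))⁻¹).val) := by
  subst hk; subst hm; rfl

lemma aux_pPart_mul {u c : G} (hcomm : Commute u c) (hu : ∃ a, u ^ p ^ a = 1)
    (hc : (orderOf c).Coprime p) : pPart p (u * c) = u := by
  obtain ⟨a, hua⟩ := hu
  obtain ⟨α, -, hord⟩ := (Nat.dvd_prime_pow (Fact.out : p.Prime)).mp
    (orderOf_dvd_of_pow_eq_one hua)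
  have hc0 : orderOf c ≠ 0 := (orderOf_pos c).ne'
  have hcop : (orderOf u).Coprime (orderOf c) := by
    rw [hord]; exact Nat.Coprime.pow_left α hc.symm
  have hn : orderOf (u * c) = p ^ α * orderOf c := by
    rw [← hord]; exact hcomm.orderOf_mul_eq_mul_orderOf_of_coprime hcop
  have hnd : ¬ p ∣ orderOf c := (Nat.Prime.coprime_iff_not_dvd (Fact.out : p.Prime)).mp hc.symm
  have hkk : (orderOf (u * c)).factorization p = α := by
    rw [hn, Nat.factorization_mul (pow_ne_zero α (Fact.out : p.Prime).ne_zero) hc0]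
    simp [Nat.Prime.factorization_pow (Fact.out : p.Prime),
      Nat.factorization_eq_zero_of_not_dvd hnd]
  have hmm : orderOf (u * c) / p ^ α = orderOf c := by
    rw [hn, Nat.mul_div_cancel_left _ (pow_pos (Fact.out : p.Prime).pos α)]
  rw [aux_pPart_eq_of hkk hmm, hcomm.mul_pow]
  have hc1 : c ^ (orderOf c * ((orderOf c : ZMod (p ^ α))⁻¹).val) = 1 := by
    rw [pow_mul, pow_orderOf_eq_one, one_pow]
  have hu1 : u ^ (orderOf c * ((orderOf c : ZMod (p ^ α))⁻¹).val) = u := by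
    have := (pow_eq_pow_iff_modEq (x := u)
      (n := orderOf c * ((orderOf c : ZMod (p ^ α))⁻¹).val) (m := 1)).mpr
      (by rw [hord]; exact aux_modeq _ α (hc.pow_right α))
    simpa using this
  rw [hc1, mul_one, hu1]

lemma aux_mem_of_pgroup {H : Subgroup G} (hH : IsPGroup p H) {x : G} (hx : x ∈ H) :
    ∃ k, x ^ p ^ k = 1 := by
  obtain ⟨k, hk⟩ := hH ⟨x, hx⟩
  refine ⟨k, ?_⟩
  have := congrArg Subtype.val hk
  rwa [SubmonoidClass.coe_pow] at this

lemma aux_subtype_pelement {H : Subgroup G} {x : G} (hx : ∃ k, x ^ p ^ k = 1)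
    (h : x ∈ H) : ∃ k, (⟨x, h⟩ : ↥H) ^ p ^ k = 1 := by
  obtain ⟨k, hk⟩ := hx
  refine ⟨k, Subtype.ext ?_⟩
  rw [SubmonoidClass.coe_pow]
  exact hk

lemma aux_isPGroup_zpowers {u : G} (hu : ∃ a, u ^ p ^ a = 1) :
    IsPGroup p (Subgroup.zpowers u) := by
  obtain ⟨a, ha⟩ := hu
  intro g
  obtain ⟨j, hj⟩ := g.2
  refine ⟨a, Subtype.ext ?_⟩
  rw [SubmonoidClass.coe_pow, OneMemClass.coe_one, ← hj]
  rw [← zpow_natCast (u ^ j), ← zpow_mul, mul_comm, zpow_mul, zpow_natCast, ha, one_zpow]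

lemma aux_cent_le_norm {H : Subgroup G} {c : G}
    (hc : c ∈ Subgroup.centralizer (H : Set G)) : c ∈ (Subgroup.normalizer (H : Set G)) := by
  rw [Subgroup.mem_normalizer_iff]
  intro h
  constructor
  · intro hh
    have e := Subgroup.mem_centralizer_iff.mp hc h hh
    have e2 : c * h * c⁻¹ = h := by rw [← e]; group
    rwa [e2]
  · intro hh
    have e := Subgroup.mem_centralizer_iff.mp hc _ hh
    have e1 : c * h = c * (c * h * c⁻¹) := by rw [← e]; group
    have e2 : h = c * h * c⁻¹ := mul_left_cancel e1
    rwa [← e2] at hh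

lemma aux_mem_norm_bot (x : G) : x ∈ (Subgroup.normalizer ((⊥ : Subgroup G) : Set G)) := by
  rw [Subgroup.mem_normalizer_iff]
  intro h
  simp only [Subgroup.mem_bot]
  constructor
  · rintro rfl; group
  · intro hh
    have : x⁻¹ * (x * h * x⁻¹) * x = x⁻¹ * 1 * x := by rw [hh]
    simpa [mul_assoc] using this

variable (p) in
/-- the trivial p-subgroup -/
def auxBot (G : Type w) [Group G] : pSubgroup p G := ⟨⊥, IsPGroup.of_bot⟩

variable (F : Type v) [Field F] [CharP F p]

/-- the global character extracted from a tuple -/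
def auxBotChar (χ : ∀ P : pSubgroup p G, ↥((Subgroup.normalizer (P.1 : Set G))) →* Fˣ) : G →* Fˣ where
  toFun g := χ (auxBot p G) ⟨g, aux_mem_norm_bot g⟩
  map_one' := by exact map_one (χ (auxBot p G))
  map_mul' a b := by
    exact map_mul (χ (auxBot p G)) ⟨a, aux_mem_norm_bot a⟩ ⟨b, aux_mem_norm_bot b⟩

/-- the constant tuple attached to a global character -/
def auxTuple (φ : G →* Fˣ) : ∀ P : pSubgroup p G, ↥((Subgroup.normalizer (P.1 : Set G))) →* Fˣ :=
  fun P => φ.comp (Subgroup.normalizer (P.1 : Set G)).subtype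

lemma auxTuple_mem (φ : G →* Fˣ) : auxTuple F φ ∈ coherentTuples p G F := by
  refine ⟨fun P x hx => ?_, fun P Q g x hx hQ hx' => ?_, fun P Q x hx hQ hx' => ?_⟩
  · exact aux_hom_eq_one (p := p) _ (aux_subtype_pelement (aux_mem_of_pgroup P.2 hx) _)
  · show φ (g * x * g⁻¹) = φ x
    rw [map_mul, map_mul, map_inv, mul_comm (φ g) (φ x), mul_inv_cancel_right]
  · rfl

/-- climbing lemma: transporting the value at a p'-central element up a chain -/
lemma aux_climb (χ : ∀ P : pSubgroup p G, ↥((Subgroup.normalizer (P.1 : Set G))) →* Fˣ)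
    (hχ : CoherentPred p χ) (P : pSubgroup p G) {d : G}
    (hd : d ∈ Subgroup.centralizer (P.1 : Set G)) (hdo : (orderOf d).Coprime p) :
    ∀ (n : ℕ) (R : pSubgroup p G), R.1 ≤ P.1 →
      Nat.card P.1 - Nat.card R.1 ≤ n →
      ∀ (hdR : d ∈ (Subgroup.normalizer (R.1 : Set G))), χ R ⟨d, hdR⟩ = auxBotChar F χ d →
      ∀ (hdP : d ∈ (Subgroup.normalizer (P.1 : Set G))), χ P ⟨d, hdP⟩ = auxBotChar F χ d := by
  intro n
  induction n with
  | zero =>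
    intro R hRP hcard hdR hval hdP
    have hcard' : Nat.card P.1 ≤ Nat.card R.1 := by omega
    have : R.1 = P.1 := Subgroup.eq_of_le_of_card_ge hRP hcard'
    obtain rfl : R = P := Subtype.ext this
    exact hval
  | succ n ih =>
    intro R hRP hcard hdR hval hdP
    rcases eq_or_lt_of_le hRP with heq | hlt
    · obtain rfl : R = P := Subtype.ext heq
      exact hval
    · have hnil : Group.IsNilpotent ↥P.1 := IsPGroup.isNilpotent P.2
      have hcond : NormalizerCondition ↥P.1 := normalizerCondition_of_isNilpotent
      have hlt' : R.1.subgroupOf P.1 < ⊤ := by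
        refine lt_top_iff_ne_top.mpr fun h => ?_
        exact hlt.ne (le_antisymm hRP (Subgroup.subgroupOf_eq_top.mp h))
      obtain ⟨u, hu_mem, hu_not⟩ := SetLike.exists_of_lt (hcond _ hlt')
      set u₀ := (u : G) with hu₀
      have hu₀P : u₀ ∈ P.1 := u.2
      have hu₀R : u₀ ∉ R.1 := fun h => hu_not (Subgroup.mem_subgroupOf.mpr h)
      have hu₀n : u₀ ∈ (Subgroup.normalizer (R.1 : Set G)) := by
        rw [Subgroup.mem_normalizer_iff]
        intro h
        constructor
        · intro hh
          have h1 : (⟨h, hRP hh⟩ : ↥P.1) ∈ R.1.subgroupOf P.1 :=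
            Subgroup.mem_subgroupOf.mpr hh
          have h2 := (Subgroup.mem_normalizer_iff.mp hu_mem ⟨h, hRP hh⟩).mp h1
          exact Subgroup.mem_subgroupOf.mp h2
        · intro hh
          have hhP : h ∈ P.1 := by
            have h1 : u₀⁻¹ * (u₀ * h * u₀⁻¹) * u₀ ∈ P.1 :=
              mul_mem (mul_mem (inv_mem hu₀P) (hRP hh)) hu₀P
            simpa [mul_assoc] using h1
          have h1 : (u * ⟨h, hhP⟩ * u⁻¹ : ↥P.1) ∈ R.1.subgroupOf P.1 :=
            Subgroup.mem_subgroupOf.mpr hh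
          have h2 := (Subgroup.mem_normalizer_iff.mp hu_mem ⟨h, hhP⟩).mpr h1
          exact Subgroup.mem_subgroupOf.mp h2
      have hu₀p : ∃ k, u₀ ^ p ^ k = 1 := aux_mem_of_pgroup P.2 hu₀P
      have hQpg : IsPGroup p ↥(R.1 ⊔ Subgroup.zpowers u₀) :=
        IsPGroup.to_sup_of_normal_left' R.2 (aux_isPGroup_zpowers hu₀p)
          (Subgroup.zpowers_le.mpr hu₀n)
      set Q : pSubgroup p G := ⟨R.1 ⊔ Subgroup.zpowers u₀, hQpg⟩ with hQdef
      have hQP : Q.1 ≤ P.1 := sup_le hRP (Subgroup.zpowers_le.mpr hu₀P)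
      have hu₀Q : u₀ ∈ Q.1 := Subgroup.mem_sup_right (Subgroup.mem_zpowers u₀)
      have hRQ : R.1 < Q.1 :=
        lt_of_le_of_ne le_sup_left (fun h => hu₀R (h ▸ hu₀Q))
      have hQle : Q.1 ≤ Subgroup.centralizer ({d} : Set G) := by
        refine sup_le (fun r hr => Subgroup.mem_centralizer_iff.mpr ?_) ?_
        · rintro e rfl
          exact (Subgroup.mem_centralizer_iff.mp hd r (hRP hr)).symm
        · rw [Subgroup.zpowers_le]
          refine Subgroup.mem_centralizer_iff.mpr ?_
          rintro e rfl
          exact (Subgroup.mem_centralizer_iff.mp hd u₀ hu₀P).symm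
      have hdQc : d ∈ Subgroup.centralizer (Q.1 : Set G) := by
        rw [Subgroup.mem_centralizer_iff]
        intro g hg
        exact (Subgroup.mem_centralizer_iff.mp (hQle hg) d rfl).symm
      have hdQn : d ∈ (Subgroup.normalizer (Q.1 : Set G)) := aux_cent_le_norm hdQc
      have hcommud : Commute u₀ d := Subgroup.mem_centralizer_iff.mp hd u₀ hu₀P
      have hpp : pPart p (u₀ * d) = u₀ := aux_pPart_mul hcommud hu₀p hdo
      have hQeq : Q.1 = R.1 ⊔ Subgroup.zpowers (pPart p (u₀ * d)) := by rw [hpp]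
      have hxR : u₀ * d ∈ (Subgroup.normalizer (R.1 : Set G)) := mul_mem hu₀n hdR
      have hxQ : u₀ * d ∈ (Subgroup.normalizer (Q.1 : Set G)) :=
        mul_mem (Subgroup.le_normalizer hu₀Q) hdQn
      have hstep := hχ.2.2 R Q (u₀ * d) hxR hQeq hxQ
      have hRsplit : χ R ⟨u₀ * d, hxR⟩ = χ R ⟨u₀, hu₀n⟩ * χ R ⟨d, hdR⟩ := by
        rw [show (⟨u₀ * d, hxR⟩ : ↥(Subgroup.normalizer (R.1 : Set G))) = ⟨u₀, hu₀n⟩ * ⟨d, hdR⟩ from rfl,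
          map_mul]
      have hQsplit : χ Q ⟨u₀ * d, hxQ⟩ =
          χ Q ⟨u₀, Subgroup.le_normalizer hu₀Q⟩ * χ Q ⟨d, hdQn⟩ := by
        rw [show (⟨u₀ * d, hxQ⟩ : ↥(Subgroup.normalizer (Q.1 : Set G))) =
          ⟨u₀, Subgroup.le_normalizer hu₀Q⟩ * ⟨d, hdQn⟩ from rfl, map_mul]
      have hR1 : χ R ⟨u₀, hu₀n⟩ = 1 :=
        aux_hom_eq_one _ (aux_subtype_pelement hu₀p hu₀n)
      have hQ1 : χ Q ⟨u₀, Subgroup.le_normalizer hu₀Q⟩ = 1 :=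
        aux_hom_eq_one _ (aux_subtype_pelement hu₀p (Subgroup.le_normalizer hu₀Q))
      have hdval : χ Q ⟨d, hdQn⟩ = auxBotChar F χ d := by
        rw [hRsplit, hQsplit, hR1, hQ1, one_mul, one_mul] at hstep
        rw [← hstep]
        exact hval
      have hcardRQ : Nat.card R.1 < Nat.card Q.1 := by
        rcases lt_or_ge (Nat.card R.1) (Nat.card Q.1) with h | h
        · exact h
        · exact absurd (Subgroup.eq_of_le_of_card_ge hRQ.le h) hRQ.ne
      have hcardQP : Nat.card Q.1 ≤ Nat.card P.1 := Subgroup.card_le_of_le hQP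
      exact ih Q hQP (by omega) hdQn hdval hdP

lemma aux_eq_botChar (χ : ∀ P : pSubgroup p G, ↥((Subgroup.normalizer (P.1 : Set G))) →* Fˣ)
    (hχ : χ ∈ coherentTuples p G F) (P : pSubgroup p G) {x : G}
    (hx : x ∈ P.1 ⊔ Subgroup.centralizer (P.1 : Set G)) (hxn : x ∈ (Subgroup.normalizer (P.1 : Set G))) :
    χ P ⟨x, hxn⟩ = auxBotChar F χ x := by
  set K : Subgroup G := Subgroup.map (Subgroup.normalizer (P.1 : Set G)).subtype
    (MonoidHom.eqLocus (χ P) ((auxBotChar F χ).comp (Subgroup.normalizer (P.1 : Set G)).subtype)) with hK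
  have hPK : P.1 ≤ K := by
    intro a ha
    refine ⟨⟨a, Subgroup.le_normalizer ha⟩, ?_, rfl⟩
    show χ P ⟨a, Subgroup.le_normalizer ha⟩ = auxBotChar F χ a
    rw [hχ.1 P a ha]
    exact (aux_hom_eq_one (auxBotChar F χ) (aux_mem_of_pgroup P.2 ha)).symm
  have hCK : Subgroup.centralizer (P.1 : Set G) ≤ K := by
    intro c hc
    have hcn : c ∈ (Subgroup.normalizer (P.1 : Set G)) := aux_cent_le_norm hc
    refine ⟨⟨c, hcn⟩, ?_, rfl⟩
    show χ P ⟨c, hcn⟩ = auxBotChar F χ c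
    set v := pPart p c with hv
    set d := v⁻¹ * c with hdd
    have hvz : v ∈ Subgroup.zpowers c := aux_pPart_mem_zpowers c
    have hvC : v ∈ Subgroup.centralizer (P.1 : Set G) := (Subgroup.zpowers_le.mpr hc) hvz
    have hdC : d ∈ Subgroup.centralizer (P.1 : Set G) := mul_mem (inv_mem hvC) hc
    have hvn : v ∈ (Subgroup.normalizer (P.1 : Set G)) := aux_cent_le_norm hvC
    have hdn : d ∈ (Subgroup.normalizer (P.1 : Set G)) := aux_cent_le_norm hdC
    have hdo : (orderOf d).Coprime p := aux_orderOf_coprime c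
    have hdval : χ P ⟨d, hdn⟩ = auxBotChar F χ d :=
      aux_climb F χ hχ P hdC hdo (Nat.card P.1) (auxBot p G) bot_le
        (Nat.sub_le _ _) (aux_mem_norm_bot d) rfl hdn
    have hcsplit : (⟨c, hcn⟩ : ↥(Subgroup.normalizer (P.1 : Set G))) = ⟨v, hvn⟩ * ⟨d, hdn⟩ :=
      Subtype.ext (by show c = v * (v⁻¹ * c); group)
    rw [hcsplit, map_mul, hdval]
    have hv1 : χ P ⟨v, hvn⟩ = 1 :=
      aux_hom_eq_one _ (aux_subtype_pelement (aux_pPart_pelement c) hvn)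
    have hv2 : auxBotChar F χ v = 1 := aux_hom_eq_one _ (aux_pPart_pelement c)
    have hsplit2 : auxBotChar F χ c = auxBotChar F χ v * auxBotChar F χ d := by
      rw [← map_mul]
      congr 1
      show c = v * (v⁻¹ * c)
      group
    rw [hsplit2, hv1, hv2]
  obtain ⟨y, hy, hyx⟩ := (sup_le hPK hCK) hx
  have hyy : y = ⟨x, hxn⟩ := Subtype.ext hyx
  rw [hyy] at hy
  exact hy

end Aux

theorem statement12 (p : ℕ) [Fact p.Prime]
    (G : Type w) [Group G] [Finite G]
    (F : Type v) [Field F] [CharP F p] :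
    ∃ e : ((G →* Fˣ) × ↥(coherentTuplesCent p G F)) ≃* ↥(coherentTuples p G F),
      ∀ (φ : G →* Fˣ) (ψ : ↥(coherentTuplesCent p G F)) (P : pSubgroup p G)
        (x : ↥(Subgroup.normalizer (P.1 : Set G))),
        (e (φ, ψ)).1 P x = φ (x : G) * ψ.1 P x := by
  have hcentmem : ∀ (χ : ∀ P : pSubgroup p G, ↥((Subgroup.normalizer (P.1 : Set G))) →* Fˣ),
      χ ∈ coherentTuples p G F →
      χ * (auxTuple F (auxBotChar F χ))⁻¹ ∈ coherentTuplesCent p G F := by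
    intro χ hχ
    refine ⟨(coherentTuples p G F).mul_mem hχ
      ((coherentTuples p G F).inv_mem (auxTuple_mem F (auxBotChar F χ))), ?_⟩
    intro P x hxc hx
    show χ P ⟨x, hx⟩ * (auxTuple F (auxBotChar F χ) P ⟨x, hx⟩)⁻¹ = 1
    rw [aux_eq_botChar F χ hχ P hxc hx]
    exact mul_inv_cancel _
  have hbotchar_toF : ∀ (φ : G →* Fˣ) (ψ : ↥(coherentTuplesCent p G F)),
      auxBotChar F (auxTuple F φ * ψ.1) = φ := by
    intro φ ψ
    ext g
    have hg : g ∈ (auxBot p G).1 ⊔ Subgroup.centralizer ((auxBot p G).1 : Set G) := by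
      refine Subgroup.mem_sup_right ?_
      refine Subgroup.mem_centralizer_iff.mpr ?_
      intro h hh
      have : h = 1 := by simpa [auxBot] using hh
      rw [this, one_mul, mul_one]
    have hψ : ψ.1 (auxBot p G) ⟨g, aux_mem_norm_bot g⟩ = 1 :=
      ψ.2.2 (auxBot p G) g hg (aux_mem_norm_bot g)
    have hval : auxTuple F φ (auxBot p G) ⟨g, aux_mem_norm_bot g⟩ *
        ψ.1 (auxBot p G) ⟨g, aux_mem_norm_bot g⟩ = φ g := by
      rw [hψ, mul_one]; rfl
    exact congrArg Units.val hval
  refine ⟨{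
    toFun := fun φψ => ⟨auxTuple F φψ.1 * φψ.2.1,
      (coherentTuples p G F).mul_mem (auxTuple_mem F φψ.1) φψ.2.2.1⟩
    invFun := fun χ => (auxBotChar F χ.1,
      ⟨χ.1 * (auxTuple F (auxBotChar F χ.1))⁻¹, hcentmem χ.1 χ.2⟩)
    left_inv := ?_
    right_inv := ?_
    map_mul' := ?_ }, ?_⟩
  · rintro ⟨φ, ψ⟩
    have h1 := hbotchar_toF φ ψ
    refine Prod.ext h1 (Subtype.ext ?_)
    show (auxTuple F φ * ψ.1) *
      (auxTuple F (auxBotChar F (auxTuple F φ * ψ.1)))⁻¹ = ψ.1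
    rw [h1, mul_comm, inv_mul_cancel_left]
  · rintro ⟨χ, hχ⟩
    refine Subtype.ext ?_
    show auxTuple F (auxBotChar F χ) * (χ * (auxTuple F (auxBotChar F χ))⁻¹) = χ
    rw [mul_comm χ (auxTuple F (auxBotChar F χ))⁻¹]
    exact mul_inv_cancel_left _ _
  · rintro ⟨φ₁, ψ₁⟩ ⟨φ₂, ψ₂⟩
    refine Subtype.ext ?_
    show auxTuple F (φ₁ * φ₂) * (ψ₁.1 * ψ₂.1) =
      (auxTuple F φ₁ * ψ₁.1) * (auxTuple F φ₂ * ψ₂.1)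
    have : auxTuple (p := p) F (φ₁ * φ₂) = auxTuple F φ₁ * auxTuple F φ₂ := by
      funext P
      exact MonoidHom.mul_comp φ₁ φ₂ (Subgroup.normalizer (P.1 : Set G)).subtype
    rw [this, mul_mul_mul_comm]
  · intro φ ψ P x
    rfl
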